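/- Let M be an MRTA instance whose cost function c is metric and injective on E, and let (W, a) be the output of the SSI auction on M. Then there exists a plan 𝒫 of M such that (i) the vertex set of each robot-route in 𝒫 equals the vertex set of the connected component of the auction forest (R ∪ T, {w_1,…,w_{|T|}}) containing its starting robot, and (ii) C(𝒫) ≤ 2 · C(MinSum(M)). -/

import Mathlib

open Finset

/-- The (traversal) cost of a route given as a list of vertices: the sum of the
costs of consecutive pairs. -/
def pathCost {α : Type*} (c : α → α → ℝ) (l : List α) : ℝ :=
  ((l.zip l.tail).map fun p => c p.1 p.2).sum

/-- The set of tasks assigned in the bid rounds with (0-based) index `< k`. -/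
def auctionAssigned {V : Type*} [DecidableEq V] {n : ℕ} (w : Fin n → V × V) (k : ℕ) :
    Finset V :=
  (Finset.univ.filter fun i : Fin n => (i : ℕ) < k).image fun i => (w i).2

/-- `w` is the output of the SSI auction for the instance `(R, T, c)`. -/
def IsAuction {V : Type*} [DecidableEq V] (R T : Finset V) (c : V → V → ℝ) {n : ℕ}
    (w : Fin n → V × V) : Prop :=
  ∀ k : Fin n,
    (w k).1 ∈ R ∪ auctionAssigned w (k : ℕ) ∧
    (w k).2 ∈ T \ auctionAssigned w (k : ℕ) ∧
    ∀ s ∈ R ∪ auctionAssigned w (k : ℕ), ∀ t ∈ T \ auctionAssigned w (k : ℕ),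
      (s, t) ≠ w k → c (w k).1 (w k).2 < c s t

/-- `c` is injective on the edge set of the complete graph. -/
def InjOnEdges {V : Type*} (c : V → V → ℝ) : Prop :=
  ∀ x y x' y' : V, x ≠ y → x' ≠ y' → c x y = c x' y' →
    (x = x' ∧ y = y') ∨ (x = y' ∧ y = x')

/-- The graph whose edges are the winning edges of the auction. -/
def auctionGraph {V : Type*} {n : ℕ} (w : Fin n → V × V) : SimpleGraph V :=
  SimpleGraph.fromRel fun x y => ∃ k, w k = (x, y)

/-- `P` is a plan: for each robot `r ∈ R`, `P r` is a robot-route starting at `r`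
whose remaining vertices are tasks, the routes have no repeated vertices, and the
vertex sets of the routes partition `R ∪ T`. -/
def IsPlan {V : Type*} (R T : Finset V) (P : V → List V) : Prop :=
  (∀ r ∈ R, ∃ rest : List V, P r = r :: rest ∧ ∀ v ∈ rest, v ∈ T) ∧
  (∀ r ∈ R, (P r).Nodup) ∧
  (∀ v : V, ∃! r : V, r ∈ R ∧ v ∈ P r)

section ListLemmas
open List

variable {α : Type*} {c : α → α → ℝ}

lemma pathCost_nil : pathCost c [] = 0 := rfl

lemma pathCost_single {a : α} : pathCost c [a] = 0 := rfl

lemma pathCost_cons_cons {a b : α} {l : List α} :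
    pathCost c (a :: b :: l) = c a b + pathCost c (b :: l) := by
  simp [pathCost]

lemma pathCost_cons {a : α} {l : List α} (hl : l ≠ []) :
    pathCost c (a :: l) = c a (l.head hl) + pathCost c l := by
  cases l with
  | nil => simp at hl
  | cons b t => simp [pathCost_cons_cons]

lemma pathCost_append {l₁ l₂ : List α} (h₁ : l₁ ≠ []) (h₂ : l₂ ≠ []) :
    pathCost c (l₁ ++ l₂) =
      pathCost c l₁ + c (l₁.getLast h₁) (l₂.head h₂) + pathCost c l₂ := by
  induction l₁ with
  | nil => simp at h₁
  | cons a t ih =>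
    cases t with
    | nil =>
      simp only [List.singleton_append, List.getLast_singleton, pathCost_single]
      rw [pathCost_cons h₂]; ring
    | cons b t' =>
      have ht : (b :: t') ≠ [] := by simp
      have : (a :: b :: t') ++ l₂ = a :: b :: (t' ++ l₂) := by simp
      rw [this]
      have ht2 : (b :: (t' ++ l₂)) = (b :: t') ++ l₂ := by simp
      rw [pathCost_cons_cons, ht2, ih ht, pathCost_cons_cons]
      have : (a :: b :: t').getLast h₁ = (b :: t').getLast ht := by
        rw [List.getLast_cons ht]
      rw [this]; ring

lemma pathCost_nonneg (c0 : ∀ x y, 0 ≤ c x y) (l : List α) : 0 ≤ pathCost c l := by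
  apply List.sum_nonneg
  intro x hx
  simp only [List.mem_map] at hx
  obtain ⟨p, _, rfl⟩ := hx
  exact c0 _ _

lemma pathCost_le_cons (c0 : ∀ x y, 0 ≤ c x y) (a : α) (l : List α) :
    pathCost c l ≤ pathCost c (a :: l) := by
  cases l with
  | nil => simp [pathCost_nil, pathCost_single]
  | cons b t => rw [pathCost_cons_cons]; linarith [c0 a b]

lemma pathCost_sublist_cons (c0 : ∀ x y, 0 ≤ c x y)
    (htri : ∀ x y z, c x z ≤ c x y + c y z) {l₁ l₂ : List α} (h : l₁ <+ l₂) :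
    ∀ a, pathCost c (a :: l₁) ≤ pathCost c (a :: l₂) := by
  induction h with
  | slnil => exact fun a => le_refl _
  | @cons l₁ l₂ b h ih =>
    intro a
    refine le_trans (ih a) ?_
    cases l₂ with
    | nil =>
      rw [pathCost_single, pathCost_cons_cons]
      have := pathCost_nonneg c0 (l := ([b] : List α))
      simp [pathCost_single] at this ⊢
      exact c0 a b
    | cons x t =>
      rw [pathCost_cons_cons, pathCost_cons_cons, pathCost_cons_cons]
      have := htri a b x
      linarith
  | @cons_cons l₁ l₂ b h ih =>
    intro a
    rw [pathCost_cons_cons, pathCost_cons_cons]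
    linarith [ih b]

lemma pathCost_sublist (c0 : ∀ x y, 0 ≤ c x y)
    (htri : ∀ x y z, c x z ≤ c x y + c y z) {l₁ l₂ : List α} (h : l₁ <+ l₂) :
    pathCost c l₁ ≤ pathCost c l₂ := by
  induction h with
  | slnil => exact le_refl _
  | @cons l₁ l₂ b h ih => exact le_trans ih (pathCost_le_cons c0 b l₂)
  | @cons_cons l₁ l₂ b h ih => exact pathCost_sublist_cons c0 htri h b

variable [DecidableEq α]

lemma gl_cons {a : α} {m : List α} (hm : m ≠ []) :
    (a :: m).getLast? = m.getLast? := by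
  cases m with
  | nil => simp at hm
  | cons b t => rw [List.getLast?_cons_cons]

lemma getLast?_dedup (l : List α) : l.dedup.getLast? = l.getLast? := by
  induction l with
  | nil => simp
  | cons a m ih =>
    by_cases hm : m = []
    · subst hm; simp [List.dedup_cons_of_notMem]
    · by_cases ha : a ∈ m
      · rw [List.dedup_cons_of_mem ha, ih, gl_cons hm]
      · have hd : m.dedup ≠ [] := fun h => hm ((List.dedup_eq_nil _).mp h)
        rw [List.dedup_cons_of_notMem ha, gl_cons hd, ih, gl_cons hm]

/-- keep-first-occurrence dedup -/
def fOcc (l : List α) : List α := l.reverse.dedup.reverse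

lemma fOcc_sublist (l : List α) : fOcc l <+ l := by
  have h := List.dedup_sublist l.reverse
  have := h.reverse
  simpa [fOcc] using this

lemma fOcc_nodup (l : List α) : (fOcc l).Nodup := by
  simp [fOcc, List.nodup_dedup]

lemma fOcc_mem {l : List α} {x : α} : x ∈ fOcc l ↔ x ∈ l := by
  simp [fOcc, List.mem_dedup]

lemma fOcc_head? (l : List α) : (fOcc l).head? = l.head? := by
  rw [fOcc, List.head?_reverse, getLast?_dedup, List.getLast?_reverse]

end ListLemmas
section Auction

variable {V : Type*} [Fintype V] [DecidableEq V] {n : ℕ}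

noncomputable def aRound (w : Fin n → V × V) (v : V) : ℕ :=
  if h : ∃ k : Fin n, (w k).2 = v then (h.choose : ℕ) else 0

noncomputable def aParent (w : Fin n → V × V) (v : V) : V :=
  if h : ∃ k : Fin n, (w k).2 = v then (w h.choose).1 else v

noncomputable def aHt (w : Fin n → V × V) (v : V) : ℕ :=
  if h : ∃ k : Fin n, (w k).2 = v then aRound w v + 1 else 0

open Classical in
noncomputable def aChildren (w : Fin n → V × V) (v : V) : Finset V :=
  Finset.univ.filter
    (fun t => (∃ k : Fin n, (w k).2 = t) ∧ aParent w t = v ∧ aHt w v < aHt w t)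

lemma aHt_le (w : Fin n → V × V) (v : V) : aHt w v ≤ n := by
  unfold aHt
  split
  · next h =>
    have : (h.choose : ℕ) < n := h.choose.2
    unfold aRound
    rw [dif_pos h]
    omega
  · omega

lemma mem_aChildren {w : Fin n → V × V} {v t : V} :
    t ∈ aChildren w v ↔
      (∃ k : Fin n, (w k).2 = t) ∧ aParent w t = v ∧ aHt w v < aHt w t := by
  simp [aChildren]

noncomputable def aTour (w : Fin n → V × V) (v : V) : List V :=
  v :: ((aChildren w v).toList.attach.flatMap fun u => aTour w u.1 ++ [v])
termination_by (n + 1) - aHt w v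
decreasing_by
  have hu : u.1 ∈ aChildren w v := by
    have := u.2; rwa [Finset.mem_toList] at this
  have h1 : aHt w v < aHt w u.1 := (mem_aChildren.mp hu).2.2
  have h2 : aHt w v < n + 1 := Nat.lt_succ_of_le (aHt_le w v)
  exact Nat.sub_lt_sub_left h2 h1

lemma attach_flatMap {α β : Type*} (l : List α) (f : α → List β) :
    (l.attach.flatMap fun u => f u.1) = l.flatMap f := by
  rw [← List.attach_map_subtype_val l, List.flatMap_map]; simp

lemma aTour_eq (w : Fin n → V × V) (v : V) :
    aTour w v = v :: ((aChildren w v).toList.flatMap fun u => aTour w u ++ [v]) := by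
  rw [aTour]
  congr 1
  exact attach_flatMap _ (fun u => aTour w u ++ [v])

lemma aTour_ne_nil (w : Fin n → V × V) (v : V) : aTour w v ≠ [] := by
  rw [aTour_eq]; simp

lemma aTour_head? (w : Fin n → V × V) (v : V) : (aTour w v).head? = some v := by
  rw [aTour_eq]; rfl

lemma getLast?_cons_bind {β : Type*} (v : V) (L : List β) (f : β → List V)
    (hf : ∀ a ∈ L, ∃ l', f a = l' ++ [v]) :
    (v :: L.flatMap f).getLast? = some v := by
  induction L using List.reverseRecOn with
  | nil => rfl
  | append_singleton L a ih =>
    obtain ⟨l', hl'⟩ := hf a (by simp)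
    rw [List.flatMap_append, List.flatMap_singleton, hl']
    have : v :: (L.flatMap f ++ (l' ++ [v])) = (v :: (L.flatMap f ++ l')) ++ [v] := by
      simp
    rw [this, List.getLast?_concat]

lemma aTour_getLast? (w : Fin n → V × V) (v : V) :
    (aTour w v).getLast? = some v := by
  rw [aTour_eq]
  exact getLast?_cons_bind v _ _ (fun a _ => ⟨aTour w a, rfl⟩)

lemma mem_aTour {w : Fin n → V × V} {v x : V} :
    x ∈ aTour w v ↔ x = v ∨ ∃ u ∈ aChildren w v, x ∈ aTour w u := by
  rw [aTour_eq]
  simp only [List.mem_cons, List.mem_flatMap, List.mem_append, List.mem_singleton,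
    Finset.mem_toList]
  tauto

lemma pathCost_cons_bind (c : V → V → ℝ) (w : Fin n → V × V) (v : V) (L : List V)
    (hL : ∀ u ∈ L, (aTour w u).head? = some u ∧ (aTour w u).getLast? = some u) :
    pathCost c (v :: L.flatMap fun u => aTour w u ++ [v]) =
      (L.map fun u => c v u + c u v + pathCost c (aTour w u)).sum := by
  induction L with
  | nil => simp [pathCost_single]
  | cons u L' ih =>
    have htne : aTour w u ≠ [] := aTour_ne_nil w u
    have hsplit : v :: ((u :: L').flatMap fun u => aTour w u ++ [v]) =
        (v :: aTour w u) ++ (v :: L'.flatMap fun u => aTour w u ++ [v]) := by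
      simp [List.flatMap_cons]
    rw [hsplit]
    have h₁ : (v :: aTour w u) ≠ [] := by simp
    have h₂ : (v :: L'.flatMap fun u => aTour w u ++ [v]) ≠ [] := by simp
    rw [pathCost_append h₁ h₂]
    have hlast : (v :: aTour w u).getLast h₁ = u := by
      have h := (hL u (by simp)).2
      have : (v :: aTour w u).getLast? = some u := by
        rw [gl_cons htne]; exact h
      rwa [List.getLast?_eq_getLast h₁, Option.some_inj] at this
    have hhead : (v :: L'.flatMap fun u => aTour w u ++ [v]).head h₂ = v := rfl
    have hcost1 : pathCost c (v :: aTour w u) = c v u + pathCost c (aTour w u) := by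
      rw [pathCost_cons htne]
      congr 2
      have := (hL u (by simp)).1
      rwa [List.head?_eq_head htne, Option.some_inj] at this
    rw [hlast, hhead, hcost1, ih (fun x hx => hL x (by simp [hx]))]
    simp only [List.map_cons, List.sum_cons]
    ring

lemma aTour_cost (c : V → V → ℝ) (w : Fin n → V × V) (v : V) :
    pathCost c (aTour w v) =
      ∑ u ∈ aChildren w v, (c v u + c u v + pathCost c (aTour w u)) := by
  rw [aTour_eq, pathCost_cons_bind c w v _
    (fun u _ => ⟨aTour_head? w u, aTour_getLast? w u⟩)]
  rw [Finset.sum_map_toList]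

noncomputable def aRoot (w : Fin n → V × V) (v : V) : V :=
  (aParent w)^[aHt w v] v

open Classical in
noncomputable def aDesc (w : Fin n → V × V) (v : V) : Finset V :=
  Finset.univ.filter
    (fun t => (∃ k : Fin n, (w k).2 = t) ∧ ∃ j, 0 < j ∧ (aParent w)^[j] t = v)

lemma mem_aDesc {w : Fin n → V × V} {v t : V} :
    t ∈ aDesc w v ↔ (∃ k : Fin n, (w k).2 = t) ∧ ∃ j, 0 < j ∧ (aParent w)^[j] t = v := by
  simp [aDesc]

end Auction
section AuctionFacts

variable {V : Type*} [Fintype V] [DecidableEq V] {n : ℕ} {R T : Finset V}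
  {c : V → V → ℝ} {w : Fin n → V × V}

lemma mem_auctionAssigned {x : V} {k : ℕ} :
    x ∈ auctionAssigned w k ↔ ∃ i : Fin n, (i : ℕ) < k ∧ (w i).2 = x := by
  simp [auctionAssigned]

lemma snd_mem_T (hw : IsAuction R T c w) (k : Fin n) :
    (w k).2 ∈ T ∧ (w k).2 ∉ auctionAssigned w (k : ℕ) := by
  have := (hw k).2.1
  rwa [Finset.mem_sdiff] at this

lemma snd_inj (hw : IsAuction R T c w) : Function.Injective (fun k : Fin n => (w k).2) := by
  intro i j hij
  by_contra hne
  rcases Ne.lt_or_gt (fun h : i = j => hne h) with h | h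
  · exact (snd_mem_T hw j).2 (mem_auctionAssigned.mpr ⟨i, h, hij⟩)
  · exact (snd_mem_T hw i).2 (mem_auctionAssigned.mpr ⟨j, h, hij.symm⟩)

lemma snd_surj (hw : IsAuction R T c w) (hn : n = T.card) :
    ∀ t ∈ T, ∃ k : Fin n, (w k).2 = t := by
  intro t ht
  have himg : Finset.univ.image (fun k : Fin n => (w k).2) ⊆ T := by
    intro x hx
    simp only [Finset.mem_image] at hx
    obtain ⟨k, _, rfl⟩ := hx
    exact (snd_mem_T hw k).1
  have hcard : T.card ≤ (Finset.univ.image (fun k : Fin n => (w k).2)).card := by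
    rw [Finset.card_image_of_injective _ (snd_inj hw)]
    simp [hn]
  have := Finset.eq_of_subset_of_card_le himg hcard
  rw [← this] at ht
  simp only [Finset.mem_image] at ht
  obtain ⟨k, _, hk⟩ := ht
  exact ⟨k, hk⟩

lemma aSpec {t : V} (h : ∃ k : Fin n, (w k).2 = t) :
    ∃ k : Fin n, (w k).2 = t ∧ (k : ℕ) = aRound w t ∧ (w k).1 = aParent w t := by
  refine ⟨h.choose, h.choose_spec, ?_, ?_⟩
  · rw [aRound, dif_pos h]
  · rw [aParent, dif_pos h]

lemma aRound_eq (hw : IsAuction R T c w) {t : V} {k : Fin n} (hk : (w k).2 = t) :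
    aRound w t = (k : ℕ) ∧ (w k).1 = aParent w t := by
  obtain ⟨k', h1, h2, h3⟩ := aSpec ⟨k, hk⟩
  have : k' = k := snd_inj hw (h1.trans hk.symm)
  subst this
  exact ⟨h2.symm, h3⟩

lemma aHt_pos {t : V} (h : ∃ k : Fin n, (w k).2 = t) :
    aHt w t = aRound w t + 1 := by
  rw [aHt, dif_pos h]

lemma aHt_zero {t : V} (h : ¬∃ k : Fin n, (w k).2 = t) :
    aHt w t = 0 ∧ aParent w t = t := by
  rw [aHt, dif_neg h, aParent, dif_neg h]
  exact ⟨rfl, rfl⟩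

lemma aHt_eq_zero_iff {t : V} : aHt w t = 0 ↔ ¬∃ k : Fin n, (w k).2 = t := by
  constructor
  · intro h0 h
    rw [aHt_pos h] at h0
    omega
  · intro h
    exact (aHt_zero h).1

lemma aParent_fix {t : V} (h : aHt w t = 0) : aParent w t = t :=
  (aHt_zero (aHt_eq_zero_iff.mp h)).2

lemma task_iff (hw : IsAuction R T c w) (hn : n = T.card) {v : V} :
    v ∈ T ↔ ∃ k : Fin n, (w k).2 = v := by
  constructor
  · exact snd_surj hw hn v
  · rintro ⟨k, rfl⟩
    exact (snd_mem_T hw k).1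

lemma aParent_ne (hw : IsAuction R T c w) (hdisj : Disjoint R T) {t : V}
    (h : ∃ k : Fin n, (w k).2 = t) : aParent w t ≠ t := by
  obtain ⟨k, hk2, _, hk1⟩ := aSpec h
  intro heq
  have h1 := (hw k).1
  rw [hk1, heq, ← hk2] at h1
  rcases Finset.mem_union.mp h1 with h1 | h1
  · exact Finset.disjoint_left.mp hdisj h1 (snd_mem_T hw k).1
  · exact (snd_mem_T hw k).2 h1

lemma aHt_parent_lt (hw : IsAuction R T c w) (hdisj : Disjoint R T) {t : V}
    (h : ∃ k : Fin n, (w k).2 = t) : aHt w (aParent w t) < aHt w t := by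
  obtain ⟨k, hk2, hkr, hk1⟩ := aSpec h
  rw [aHt_pos h, ← hkr]
  by_cases hp : ∃ k' : Fin n, (w k').2 = aParent w t
  · rw [aHt_pos hp]
    have h1 := (hw k).1
    rw [hk1] at h1
    rcases Finset.mem_union.mp h1 with h1 | h1
    · obtain ⟨k', hk'⟩ := hp
      exfalso
      exact Finset.disjoint_left.mp hdisj h1 (by rw [← hk']; exact (snd_mem_T hw k').1)
    · obtain ⟨i, hik, hi2⟩ := mem_auctionAssigned.mp h1
      have := (aRound_eq hw hi2).1
      omega
  · rw [(aHt_zero hp).1]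
    omega

lemma aHt_parent_le (hw : IsAuction R T c w) (hdisj : Disjoint R T) (t : V) :
    aHt w (aParent w t) ≤ aHt w t := by
  by_cases h : ∃ k : Fin n, (w k).2 = t
  · exact (aHt_parent_lt hw hdisj h).le
  · rw [(aHt_zero h).2]

lemma aHt_iter_le (hw : IsAuction R T c w) (hdisj : Disjoint R T) (j : ℕ) (t : V) :
    aHt w ((aParent w)^[j] t) ≤ aHt w t := by
  induction j with
  | zero => simp
  | succ j ih =>
    rw [Function.iterate_succ_apply']
    exact le_trans (aHt_parent_le hw hdisj _) ih

lemma aIter_stab (hw : IsAuction R T c w) (hdisj : Disjoint R T) :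
    ∀ m, ∀ v : V, aHt w v = m → ∀ j, m ≤ j →
      (aParent w)^[j] v = (aParent w)^[m] v := by
  intro m
  induction m using Nat.strong_induction_on with
  | _ m ih =>
    intro v hv j hj
    rcases Nat.eq_zero_or_pos m with hm | hm
    · subst hm
      simp [Function.iterate_fixed (aParent_fix hv)]
    · have hvh : ∃ k : Fin n, (w k).2 = v := by
        by_contra hc
        rw [(aHt_zero hc).1] at hv; omega
      have hlt := aHt_parent_lt hw hdisj hvh
      rw [hv] at hlt
      obtain ⟨j', rfl⟩ : ∃ j', j = j' + 1 := ⟨j - 1, by omega⟩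
      obtain ⟨m', rfl⟩ : ∃ m', m = m' + 1 := ⟨m - 1, by omega⟩
      rw [Function.iterate_succ_apply, Function.iterate_succ_apply]
      rw [ih _ hlt _ rfl j' (by omega), ih _ hlt _ rfl m' (by omega)]

lemma aRoot_ht_zero (hw : IsAuction R T c w) (hdisj : Disjoint R T) (v : V) :
    aHt w (aRoot w v) = 0 := by
  generalize hm : aHt w v = m
  induction m using Nat.strong_induction_on generalizing v with
  | _ m ih =>
    rcases Nat.eq_zero_or_pos m with hz | hp
    · subst hz
      rw [aRoot, hm]
      simpa using hm
    · have hvh : ∃ k : Fin n, (w k).2 = v := by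
        by_contra hc
        rw [(aHt_zero hc).1] at hm; omega
      have hlt := aHt_parent_lt hw hdisj hvh
      rw [hm] at hlt
      have heq : aRoot w v = aRoot w (aParent w v) := by
        rw [aRoot, aRoot, hm]
        obtain ⟨m', rfl⟩ : ∃ m', m = m' + 1 := ⟨m - 1, by omega⟩
        rw [Function.iterate_succ_apply]
        exact aIter_stab hw hdisj _ _ rfl m' (by omega)
      rw [heq]
      exact ih _ hlt _ rfl

lemma aRoot_parent (hw : IsAuction R T c w) (hdisj : Disjoint R T) (v : V) :
    aRoot w (aParent w v) = aRoot w v := by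
  by_cases h : ∃ k : Fin n, (w k).2 = v
  · rw [aRoot, aRoot]
    have hlt := aHt_parent_lt hw hdisj h
    obtain ⟨m', hm'⟩ : ∃ m', aHt w v = m' + 1 := ⟨aHt w v - 1, by omega⟩
    rw [hm', Function.iterate_succ_apply]
    exact (aIter_stab hw hdisj _ _ rfl m' (by omega)).symm
  · rw [(aHt_zero h).2]

lemma aRoot_fix {v : V} (h : aHt w v = 0) : aRoot w v = v := by
  rw [aRoot, h]
  simp

lemma aRoot_eq_of_iter (hw : IsAuction R T c w) (hdisj : Disjoint R T) {v x : V} {j : ℕ}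
    (hiter : (aParent w)^[j] v = x) (hx : aHt w x = 0) : aRoot w v = x := by
  have h1 : (aParent w)^[max j (aHt w v)] v = x := by
    rw [← Nat.sub_add_cancel (le_max_left j (aHt w v)), Function.iterate_add_apply, hiter]
    exact Function.iterate_fixed (aParent_fix hx) _
  rw [aRoot, ← aIter_stab hw hdisj _ v rfl _ (le_max_right _ _), h1]

end AuctionFacts
section ForestFacts

variable {V : Type*} [Fintype V] [DecidableEq V] {n : ℕ} {R T : Finset V}
  {c : V → V → ℝ} {w : Fin n → V × V}

lemma mem_aChildren_iff (hw : IsAuction R T c w) (hdisj : Disjoint R T) {v t : V} :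
    t ∈ aChildren w v ↔ (∃ k : Fin n, (w k).2 = t) ∧ aParent w t = v := by
  rw [mem_aChildren]
  constructor
  · rintro ⟨h1, h2, _⟩; exact ⟨h1, h2⟩
  · rintro ⟨h1, h2⟩
    exact ⟨h1, h2, h2 ▸ aHt_parent_lt hw hdisj h1⟩

lemma aDesc_ht (hw : IsAuction R T c w) (hdisj : Disjoint R T) {x y : V}
    (h : x ∈ aDesc w y) : aHt w y < aHt w x := by
  obtain ⟨hx, j, hj, hiter⟩ := mem_aDesc.mp h
  obtain ⟨j', rfl⟩ : ∃ j', j = j' + 1 := ⟨j - 1, by omega⟩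
  rw [← hiter, Function.iterate_succ_apply]
  exact lt_of_le_of_lt (aHt_iter_le hw hdisj j' _) (aHt_parent_lt hw hdisj hx)

lemma aDesc_decomp (hw : IsAuction R T c w) (hdisj : Disjoint R T) (v : V) :
    aDesc w v = (aChildren w v).biUnion (fun u => insert u (aDesc w u)) := by
  ext t
  simp only [Finset.mem_biUnion]
  constructor
  · intro ht
    obtain ⟨hth, j, hj, hiter⟩ := mem_aDesc.mp ht
    clear ht
    induction j generalizing t with
    | zero => omega
    | succ j0 ihj =>
      rcases Nat.eq_zero_or_pos j0 with hz | hpz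
      · subst hz
        have hiter1 : aParent w t = v := by
          rw [show (0 : ℕ) + 1 = 1 from rfl, Function.iterate_one] at hiter
          exact hiter
        exact ⟨t, (mem_aChildren_iff hw hdisj).mpr ⟨hth, hiter1⟩, Finset.mem_insert_self _ _⟩
      · rw [Function.iterate_succ_apply] at hiter
        by_cases hp : ∃ k : Fin n, (w k).2 = aParent w t
        · obtain ⟨u, hu, hmem⟩ := ihj (aParent w t) hp hpz hiter
          refine ⟨u, hu, Finset.mem_insert.mpr (Or.inr ?_)⟩
          rcases Finset.mem_insert.mp hmem with heq | hdesc
          · exact mem_aDesc.mpr ⟨hth, 1, one_pos, by simpa using heq⟩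
          · obtain ⟨_, i, hi, hiteri⟩ := mem_aDesc.mp hdesc
            exact mem_aDesc.mpr ⟨hth, i + 1, by omega,
              by rw [Function.iterate_succ_apply]; exact hiteri⟩
        · have hfix : aParent w (aParent w t) = aParent w t := (aHt_zero hp).2
          have : (aParent w)^[j0] (aParent w t) = aParent w t :=
            Function.iterate_fixed hfix j0
          rw [this] at hiter
          exact ⟨t, (mem_aChildren_iff hw hdisj).mpr ⟨hth, hiter⟩, Finset.mem_insert_self _ _⟩
  · rintro ⟨u, hu, hmem⟩
    obtain ⟨huh, hup⟩ := (mem_aChildren_iff hw hdisj).mp hu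
    rcases Finset.mem_insert.mp hmem with rfl | hdesc
    · exact mem_aDesc.mpr ⟨huh, 1, one_pos, by simpa using hup⟩
    · obtain ⟨hth, i, hi, hiteri⟩ := mem_aDesc.mp hdesc
      exact mem_aDesc.mpr ⟨hth, i + 1, by omega,
        by rw [Function.iterate_succ_apply', hiteri, hup]⟩

lemma aDesc_insert_disj (hw : IsAuction R T c w) (hdisj : Disjoint R T) {v : V} :
    ∀ u ∈ aChildren w v, ∀ u' ∈ aChildren w v, u ≠ u' →
      Disjoint (insert u (aDesc w u)) (insert u' (aDesc w u')) := by
  intro u hu u' hu' hne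
  obtain ⟨_, hupar⟩ := (mem_aChildren_iff hw hdisj).mp hu
  obtain ⟨_, hupar'⟩ := (mem_aChildren_iff hw hdisj).mp hu'
  have hhtv : aHt w v < aHt w u := (mem_aChildren.mp hu).2.2
  have hhtv' : aHt w v < aHt w u' := (mem_aChildren.mp hu').2.2
  have key : ∀ y z : V, aParent w y = v → ∀ j, 0 < j → (aParent w)^[j] y = z →
      aHt w z ≤ aHt w v := by
    intro y z hy j hj hz
    obtain ⟨j', rfl⟩ : ∃ j', j = j' + 1 := ⟨j - 1, by omega⟩
    rw [Function.iterate_succ_apply, hy] at hz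
    rw [← hz]
    exact aHt_iter_le hw hdisj j' v
  rw [Finset.disjoint_left]
  intro x hx hx'
  rcases Finset.mem_insert.mp hx with rfl | hdx
  · rcases Finset.mem_insert.mp hx' with heq | hdx'
    · exact hne heq
    · obtain ⟨_, j, hj, hz⟩ := mem_aDesc.mp hdx'
      exact absurd (key x u' hupar j hj hz) (by omega)
  · rcases Finset.mem_insert.mp hx' with rfl | hdx'
    · obtain ⟨_, j, hj, hz⟩ := mem_aDesc.mp hdx
      exact absurd (key x u hupar' j hj hz) (by omega)
    · obtain ⟨_, j, hj, hz⟩ := mem_aDesc.mp hdx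
      obtain ⟨_, j', hj', hz'⟩ := mem_aDesc.mp hdx'
      rcases lt_trichotomy j j' with hlt | heq | hgt
      · have : (aParent w)^[j' - j] u = u' := by
          rw [← hz, ← Function.iterate_add_apply, Nat.sub_add_cancel hlt.le, hz']
        exact absurd (key u u' hupar (j' - j) (by omega) this) (by omega)
      · subst heq
        rw [hz] at hz'
        exact hne hz'
      · have : (aParent w)^[j - j'] u' = u := by
          rw [← hz', ← Function.iterate_add_apply, Nat.sub_add_cancel hgt.le, hz]
        exact absurd (key u' u hupar' (j - j') (by omega) this) (by omega)

lemma aDesc_root (hw : IsAuction R T c w) (hdisj : Disjoint R T) {v x : V}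
    (hv : aHt w v = 0) : (x ∈ aDesc w v ∨ x = v) ↔ aRoot w x = v := by
  constructor
  · rintro (hd | rfl)
    · obtain ⟨_, j, _, hiter⟩ := mem_aDesc.mp hd
      exact aRoot_eq_of_iter hw hdisj hiter hv
    · exact aRoot_fix hv
  · intro hr
    by_cases h : ∃ k : Fin n, (w k).2 = x
    · left
      refine mem_aDesc.mpr ⟨h, aHt w x, ?_, hr⟩
      rw [aHt_pos h]; omega
    · right
      have h0 : aHt w x = 0 := (aHt_zero h).1
      rw [← hr, aRoot_fix h0]

lemma aTour_cost_desc (hw : IsAuction R T c w) (hdisj : Disjoint R T) (v : V) :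
    pathCost c (aTour w v) =
      ∑ t ∈ aDesc w v, (c (aParent w t) t + c t (aParent w t)) := by
  have main : ∀ m, ∀ v : V, n + 1 - aHt w v ≤ m →
      pathCost c (aTour w v) =
        ∑ t ∈ aDesc w v, (c (aParent w t) t + c t (aParent w t)) := by
    intro m
    induction m with
    | zero =>
      intro v hv
      have := aHt_le w v
      omega
    | succ m ih =>
      intro v hv
      rw [aTour_cost, aDesc_decomp hw hdisj v,
        Finset.sum_biUnion ?hd]
      case hd =>
        intro u hu u' hu' hne
        exact aDesc_insert_disj hw hdisj u hu u' hu' hne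
      refine Finset.sum_congr rfl (fun u hu => ?_)
      obtain ⟨huh, hupar⟩ := (mem_aChildren_iff hw hdisj).mp hu
      have hnotmem : u ∉ aDesc w u := by
        intro hmem
        exact absurd (aDesc_ht hw hdisj hmem) (lt_irrefl _)
      rw [Finset.sum_insert hnotmem, hupar]
      have hle : n + 1 - aHt w u ≤ m := by
        have h1 : aHt w v < aHt w u := (mem_aChildren.mp hu).2.2
        have h2 := aHt_le w u
        omega
      rw [ih u hle]
  exact main (n + 1) v (by omega)

lemma mem_aTour_iff (hw : IsAuction R T c w) (hdisj : Disjoint R T) {v x : V} :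
    x ∈ aTour w v ↔ x = v ∨ x ∈ aDesc w v := by
  have main : ∀ m, ∀ v : V, n + 1 - aHt w v ≤ m →
      ∀ x : V, (x ∈ aTour w v ↔ x = v ∨ x ∈ aDesc w v) := by
    intro m
    induction m with
    | zero =>
      intro v hv
      have := aHt_le w v
      omega
    | succ m ih =>
      intro v hv x
      rw [mem_aTour, aDesc_decomp hw hdisj v]
      simp only [Finset.mem_biUnion]
      constructor
      · rintro (rfl | ⟨u, hu, hmem⟩)
        · exact Or.inl rfl
        · have hle : n + 1 - aHt w u ≤ m := by
            have h1 : aHt w v < aHt w u := (mem_aChildren.mp hu).2.2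
            have h2 := aHt_le w u
            omega
          rcases (ih u hle x).mp hmem with rfl | hd
          · exact Or.inr ⟨x, hu, Finset.mem_insert_self _ _⟩
          · exact Or.inr ⟨u, hu, Finset.mem_insert.mpr (Or.inr hd)⟩
      · rintro (rfl | ⟨u, hu, hmem⟩)
        · exact Or.inl rfl
        · have hle : n + 1 - aHt w u ≤ m := by
            have h1 : aHt w v < aHt w u := (mem_aChildren.mp hu).2.2
            have h2 := aHt_le w u
            omega
          rcases Finset.mem_insert.mp hmem with rfl | hd
          · exact Or.inr ⟨x, hu, (ih x hle x).mpr (Or.inl rfl)⟩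
          · exact Or.inr ⟨u, hu, (ih u hle x).mpr (Or.inr hd)⟩
  exact main (n + 1) v (by omega) x

end ForestFacts
section TotalCost

variable {V : Type*} [Fintype V] [DecidableEq V] {n : ℕ} {R T : Finset V}
  {c : V → V → ℝ} {w : Fin n → V × V}

lemma robot_ht_zero (hw : IsAuction R T c w) (hdisj : Disjoint R T) {r : V}
    (hr : r ∈ R) : aHt w r = 0 := by
  rw [aHt_eq_zero_iff]
  rintro ⟨k, hk⟩
  exact Finset.disjoint_left.mp hdisj hr (hk ▸ (snd_mem_T hw k).1)

lemma aRoot_mem_R (hw : IsAuction R T c w) (hn : n = T.card) (hdisj : Disjoint R T)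
    (hunion : R ∪ T = Finset.univ) (v : V) : aRoot w v ∈ R := by
  have h0 := aRoot_ht_zero hw hdisj v
  have hnt : aRoot w v ∉ T := by
    intro hmem
    obtain ⟨k, hk⟩ := snd_surj hw hn _ hmem
    exact (aHt_eq_zero_iff.mp h0) ⟨k, hk⟩
  have : aRoot w v ∈ R ∪ T := hunion ▸ Finset.mem_univ _
  rcases Finset.mem_union.mp this with h | h
  · exact h
  · exact absurd h hnt

lemma aDesc_R_disjoint (hw : IsAuction R T c w) (hdisj : Disjoint R T) {r r' : V}
    (hr : aHt w r = 0) (hr' : aHt w r' = 0) (hne : r ≠ r') :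
    Disjoint (aDesc w r) (aDesc w r') := by
  rw [Finset.disjoint_left]
  intro x hx hx'
  have h1 := (aDesc_root hw hdisj hr).mp (Or.inl hx)
  have h2 := (aDesc_root hw hdisj hr').mp (Or.inl hx')
  exact hne (h1 ▸ h2 ▸ rfl)

lemma T_eq_biUnion (hw : IsAuction R T c w) (hn : n = T.card) (hdisj : Disjoint R T)
    (hunion : R ∪ T = Finset.univ) :
    T = R.biUnion (fun r => aDesc w r) := by
  ext t
  simp only [Finset.mem_biUnion]
  constructor
  · intro ht
    refine ⟨aRoot w t, aRoot_mem_R hw hn hdisj hunion t, ?_⟩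
    have h0 := aRoot_ht_zero hw hdisj t
    rcases (aDesc_root hw hdisj h0).mpr rfl with hd | heq
    · exact hd
    · exfalso
      have hnt : aRoot w t ∉ T := by
        intro hmem
        obtain ⟨k, hk⟩ := snd_surj hw hn _ hmem
        exact (aHt_eq_zero_iff.mp h0) ⟨k, hk⟩
      rw [← heq] at hnt
      exact hnt ht
  · rintro ⟨r, _, hd⟩
    obtain ⟨⟨k, hk⟩, _⟩ := mem_aDesc.mp hd
    exact hk ▸ (snd_mem_T hw k).1

lemma total_tour_cost (hw : IsAuction R T c w) (hn : n = T.card) (hdisj : Disjoint R T)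
    (hunion : R ∪ T = Finset.univ) (hsymm : ∀ x y, c x y = c y x) :
    ∑ r ∈ R, pathCost c (aTour w r) = 2 * ∑ k : Fin n, c (w k).1 (w k).2 := by
  have step1 : ∑ r ∈ R, pathCost c (aTour w r) =
      ∑ r ∈ R, ∑ t ∈ aDesc w r, (c (aParent w t) t + c t (aParent w t)) :=
    Finset.sum_congr rfl (fun r _ => aTour_cost_desc hw hdisj r)
  have step2 : ∑ r ∈ R, ∑ t ∈ aDesc w r, (c (aParent w t) t + c t (aParent w t)) =
      ∑ t ∈ T, (c (aParent w t) t + c t (aParent w t)) := by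
    rw [T_eq_biUnion hw hn hdisj hunion, Finset.sum_biUnion]
    intro r hr r' hr' hne
    exact aDesc_R_disjoint hw hdisj (robot_ht_zero hw hdisj hr)
      (robot_ht_zero hw hdisj hr') hne
  have step3 : ∑ t ∈ T, (c (aParent w t) t + c t (aParent w t)) =
      ∑ k : Fin n, (c (w k).1 (w k).2 + c (w k).2 (w k).1) := by
    refine (Finset.sum_bij (fun (k : Fin n) _ => (w k).2) ?_ ?_ ?_ ?_).symm
    · intro k _
      exact (snd_mem_T hw k).1
    · intro k _ k' _ h
      exact snd_inj hw h
    · intro t ht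
      obtain ⟨k, hk⟩ := snd_surj hw hn t ht
      exact ⟨k, Finset.mem_univ _, hk⟩
    · intro k _
      rw [(aRound_eq hw (rfl : (w k).2 = (w k).2)).2]
  rw [step1, step2, step3]
  have : ∀ k : Fin n, c (w k).1 (w k).2 + c (w k).2 (w k).1 = 2 * c (w k).1 (w k).2 := by
    intro k
    rw [hsymm (w k).2 (w k).1]
    ring
  rw [Finset.sum_congr rfl (fun k _ => this k), ← Finset.mul_sum]

lemma adj_root (hw : IsAuction R T c w) (hdisj : Disjoint R T) {x y : V}
    (h : (auctionGraph w).Adj x y) : aRoot w x = aRoot w y := by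
  rw [auctionGraph, SimpleGraph.fromRel_adj] at h
  obtain ⟨hne, h | h⟩ := h
  · obtain ⟨k, hk⟩ := h
    have hk2 : (w k).2 = y := by rw [hk]
    have hk1 : (w k).1 = x := by rw [hk]
    have hpar : aParent w y = x := by
      rw [← (aRound_eq hw hk2).2, hk1]
    rw [← aRoot_parent hw hdisj y, hpar]
  · obtain ⟨k, hk⟩ := h
    have hk2 : (w k).2 = x := by rw [hk]
    have hk1 : (w k).1 = y := by rw [hk]
    have hpar : aParent w x = y := by
      rw [← (aRound_eq hw hk2).2, hk1]
    rw [← aRoot_parent hw hdisj x, hpar]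

lemma reachable_iff_root (hw : IsAuction R T c w) (hdisj : Disjoint R T) {r v : V}
    (hr : aHt w r = 0) : (auctionGraph w).Reachable r v ↔ aRoot w v = r := by
  constructor
  · intro h
    have key : ∀ {a b : V}, (auctionGraph w).Walk a b → aRoot w a = aRoot w b := by
      intro a b p
      induction p with
      | nil => rfl
      | cons hadj _ ih => rw [adj_root hw hdisj hadj, ih]
    obtain ⟨p⟩ := h
    rw [← key p, aRoot_fix hr]
  · intro h
    have main : ∀ m, ∀ v : V, aHt w v ≤ m → aRoot w v = r →
        (auctionGraph w).Reachable r v := by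
      intro m
      induction m with
      | zero =>
        intro v hv hroot
        have h0 : aHt w v = 0 := by omega
        rw [aRoot_fix h0] at hroot
        rw [← hroot]
      | succ m ih =>
        intro v hv hroot
        by_cases hex : ∃ k : Fin n, (w k).2 = v
        · have hadj : (auctionGraph w).Adj (aParent w v) v := by
            rw [auctionGraph, SimpleGraph.fromRel_adj]
            refine ⟨aParent_ne hw hdisj hex, Or.inl ?_⟩
            obtain ⟨k, hk2, _, hk1⟩ := aSpec hex
            exact ⟨k, Prod.ext hk1 hk2⟩
          have hrp : (auctionGraph w).Reachable r (aParent w v) := by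
            refine ih (aParent w v) ?_ ?_
            · have := aHt_parent_lt hw hdisj hex
              omega
            · rw [aRoot_parent hw hdisj, hroot]
          exact hrp.trans hadj.reachable
        · have h0 : aHt w v = 0 := (aHt_zero hex).1
          rw [aRoot_fix h0] at hroot
          rw [← hroot]
    exact main (aHt w v) v le_rfl h

end TotalCost
section PlanSide

variable {V : Type*} [Fintype V] [DecidableEq V] {R T : Finset V} {c : V → V → ℝ}

lemma plan_pred (hdisj : Disjoint R T) {Q : V → List V} (hQ : IsPlan R T Q)
    (c0 : ∀ x y, 0 ≤ c x y) :
    ∃ (p : V → V) (ν : V → ℕ),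
      (∀ t ∈ T, p t ≠ t ∧ (p t ∈ T → ν (p t) < ν t)) ∧
      ∑ t ∈ T, c (p t) t ≤ ∑ r ∈ R, pathCost c (Q r) := by
  classical
  have hex : ∀ t : V, ∃ r, r ∈ R ∧ t ∈ Q r := fun t => (hQ.2.2 t).exists
  set rt : V → V := fun t => (hex t).choose with hrtdef
  have hrt_spec : ∀ t, rt t ∈ R ∧ t ∈ Q (rt t) := fun t => (hex t).choose_spec
  have hrt_unique : ∀ t r, r ∈ R → t ∈ Q r → rt t = r := by
    intro t r hr htm
    exact ((hQ.2.2 t).unique ⟨(hrt_spec t).1, (hrt_spec t).2⟩ ⟨hr, htm⟩)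
  set ν : V → ℕ := fun t => (Q (rt t)).idxOf t with hνdef
  set p : V → V := fun t => (Q (rt t)).getD (ν t - 1) t with hpdef
  have hidx : ∀ t ∈ T, 0 < ν t ∧ ν t < (Q (rt t)).length := by
    intro t ht
    have hne : rt t ≠ t := by
      intro h
      exact Finset.disjoint_left.mp hdisj (h ▸ (hrt_spec t).1) ht
    obtain ⟨rest, hroute, _⟩ := hQ.1 (rt t) (hrt_spec t).1
    constructor
    · show 0 < (Q (rt t)).idxOf t
      rw [hroute, List.idxOf_cons_ne rest hne]
      omega
    · exact List.idxOf_lt_length_iff.mpr (hrt_spec t).2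
  have hpget : ∀ t ∈ T, ∀ (h : ν t - 1 < (Q (rt t)).length), p t = (Q (rt t))[ν t - 1] := by
    intro t ht h
    show (Q (rt t)).getD (ν t - 1) t = _
    rw [List.getD_eq_getElem _ _ h]
  have hnodup : ∀ r ∈ R, (Q r).Nodup := hQ.2.1
  -- key facts
  have keyA : ∀ t ∈ T, p t ≠ t := by
    intro t ht
    obtain ⟨h1, h2⟩ := hidx t ht
    have hm1 : ν t - 1 < (Q (rt t)).length := by omega
    rw [hpget t ht hm1]
    have hti : (Q (rt t))[ν t]'h2 = t := List.getElem_idxOf h2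
    intro hcontra
    have := ((hnodup _ (hrt_spec t).1).getElem_inj_iff).mp (hcontra.trans hti.symm)
    omega
  have keyB : ∀ t ∈ T, p t ∈ Q (rt t) := by
    intro t ht
    obtain ⟨h1, h2⟩ := hidx t ht
    have hm1 : ν t - 1 < (Q (rt t)).length := by omega
    rw [hpget t ht hm1]
    exact List.getElem_mem hm1
  have keyC : ∀ t ∈ T, p t ∈ T → ν (p t) < ν t := by
    intro t ht hpT
    obtain ⟨h1, h2⟩ := hidx t ht
    have hm1 : ν t - 1 < (Q (rt t)).length := by omega
    have hrteq : rt (p t) = rt t := hrt_unique (p t) (rt t) (hrt_spec t).1 (keyB t ht)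
    have : ν (p t) = ν t - 1 := by
      show (Q (rt (p t))).idxOf (p t) = ν t - 1
      rw [hrteq, hpget t ht hm1]
      exact (hnodup _ (hrt_spec t).1).idxOf_getElem _ hm1
    omega
  have keyD : ∀ t ∈ T, (p t, t) ∈ (Q (rt t)).zip (Q (rt t)).tail := by
    intro t ht
    obtain ⟨h1, h2⟩ := hidx t ht
    set l := Q (rt t) with hl
    have hm1 : ν t - 1 < l.length := by omega
    have hzlen : (l.zip l.tail).length = l.length - 1 := by
      rw [List.length_zip, List.length_tail]
      omega
    have hm2 : ν t - 1 < (l.zip l.tail).length := by omega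
    have hm3 : ν t - 1 < l.tail.length := by
      rw [List.length_tail]; omega
    have hg : (l.zip l.tail)[ν t - 1]'hm2 = (l[ν t - 1]'hm1, l.tail[ν t - 1]'hm3) :=
      List.getElem_zip ..
    have htail : l.tail[ν t - 1]'hm3 = l[ν t]'h2 := by
      have := List.getElem_tail hm3
      rw [this]
      congr 1
      omega
    have hti : l[ν t]'h2 = t := List.getElem_idxOf h2
    have : (l.zip l.tail)[ν t - 1]'hm2 = (p t, t) := by
      rw [hg, htail, hti, ← hpget t ht hm1]
    rw [← this]
    exact List.getElem_mem hm2
  refine ⟨p, ν, fun t ht => ⟨keyA t ht, keyC t ht⟩, ?_⟩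
  -- the sum bound
  have hT_eq : T = R.biUnion (fun r => T.filter (fun t => t ∈ Q r)) := by
    ext t
    simp only [Finset.mem_biUnion, Finset.mem_filter]
    constructor
    · intro ht
      exact ⟨rt t, (hrt_spec t).1, ht, (hrt_spec t).2⟩
    · rintro ⟨r, _, ht, _⟩
      exact ht
  have hdisj2 : ∀ r ∈ R, ∀ r' ∈ R, r ≠ r' →
      Disjoint (T.filter (fun t => t ∈ Q r)) (T.filter (fun t => t ∈ Q r')) := by
    intro r hr r' hr' hne
    rw [Finset.disjoint_left]
    intro t ht ht'
    obtain ⟨_, htm⟩ := Finset.mem_filter.mp ht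
    obtain ⟨_, htm'⟩ := Finset.mem_filter.mp ht'
    exact hne ((hrt_unique t r hr htm).symm.trans (hrt_unique t r' hr' htm'))
  rw [hT_eq, Finset.sum_biUnion hdisj2]
  refine Finset.sum_le_sum (fun r hr => ?_)
  set l := Q r with hl
  set zl := l.zip l.tail with hzl
  have hzl_nodup : zl.Nodup := by
    have hmap : zl.map Prod.snd = l.tail := by
      apply List.map_snd_zip
      rw [List.length_tail]
      omega
    have : (zl.map Prod.snd).Nodup := by
      rw [hmap]
      exact (hnodup r hr).tail
    exact this.of_map
  have himg : (T.filter (fun t => t ∈ Q r)).image (fun t => (p t, t)) ⊆ zl.toFinset := by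
    intro pr hpr
    obtain ⟨t, ht, rfl⟩ := Finset.mem_image.mp hpr
    obtain ⟨htT, htm⟩ := Finset.mem_filter.mp ht
    have := keyD t htT
    rw [hrt_unique t r hr htm] at this
    exact List.mem_toFinset.mpr this
  calc ∑ t ∈ T.filter (fun t => t ∈ Q r), c (p t) t
      = ∑ pr ∈ (T.filter (fun t => t ∈ Q r)).image (fun t => (p t, t)), c pr.1 pr.2 := by
        rw [Finset.sum_image]
        intro x _ y _ h
        exact (Prod.mk.injEq _ _ _ _).mp h |>.2
    _ ≤ ∑ pr ∈ zl.toFinset, c pr.1 pr.2 :=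
        Finset.sum_le_sum_of_subset_of_nonneg himg (fun pr _ _ => c0 pr.1 pr.2)
    _ = (zl.map fun pr => c pr.1 pr.2).sum := List.sum_toFinset _ hzl_nodup
    _ = pathCost c (Q r) := rfl

end PlanSide
section HallSide

variable {V : Type*} [Fintype V] [DecidableEq V] {n : ℕ} {R T : Finset V}
  {c : V → V → ℝ} {w : Fin n → V × V}

lemma aRound_lt_n {t : V} (h : ∃ k : Fin n, (w k).2 = t) : aRound w t < n := by
  obtain ⟨k, _, hkr, _⟩ := aSpec h
  rw [← hkr]
  exact k.2

lemma aRound_inj (hw : IsAuction R T c w) {x y : V} (hx : ∃ k : Fin n, (w k).2 = x)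
    (hy : ∃ k : Fin n, (w k).2 = y) (h : aRound w x = aRound w y) : x = y := by
  obtain ⟨k, hk2, hkr, _⟩ := aSpec hx
  obtain ⟨k', hk2', hkr', _⟩ := aSpec hy
  have hk : k = k' := Fin.ext (by omega)
  rw [← hk2, ← hk2', hk]

lemma mem_assigned_iff (hw : IsAuction R T c w) {t : V} (h : ∃ k : Fin n, (w k).2 = t)
    (k : ℕ) : t ∈ auctionAssigned w k ↔ aRound w t < k := by
  constructor
  · intro hm
    obtain ⟨i, hik, hi2⟩ := mem_auctionAssigned.mp hm
    rw [(aRound_eq hw hi2).1]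
    exact hik
  · intro hlt
    obtain ⟨k', hk2', hkr', _⟩ := aSpec h
    exact mem_auctionAssigned.mpr ⟨k', by omega, hk2'⟩

lemma auction_le_plan (hw : IsAuction R T c w) (hn : n = T.card) (hdisj : Disjoint R T)
    (hunion : R ∪ T = Finset.univ) (hsymm : ∀ x y, c x y = c y x)
    (p : V → V) (ν : V → ℕ)
    (hp : ∀ t ∈ T, p t ≠ t ∧ (p t ∈ T → ν (p t) < ν t)) :
    ∑ k : Fin n, c (w k).1 (w k).2 ≤ ∑ t ∈ T, c (p t) t := by
  classical
  set lo : V → ℕ := fun t => if p t ∈ T then min (aRound w (p t)) (aRound w t) + 1 else 0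
    with hlodef
  set hi : V → ℕ := fun t => if p t ∈ T then max (aRound w (p t)) (aRound w t) else aRound w t
    with hhidef
  set I : V → Finset (Fin n) :=
    fun t => Finset.univ.filter (fun k => lo t ≤ (k : ℕ) ∧ (k : ℕ) ≤ hi t) with hIdef
  have hmemI : ∀ t (k : Fin n), k ∈ I t ↔ lo t ≤ (k : ℕ) ∧ (k : ℕ) ≤ hi t := by
    intro t k
    simp [hIdef]
  have htask : ∀ t ∈ T, ∃ k : Fin n, (w k).2 = t := fun t ht => (task_iff hw hn).mp ht
  have hrne : ∀ t ∈ T, p t ∈ T → aRound w (p t) ≠ aRound w t := by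
    intro t ht hpT h
    exact (hp t ht).1 (aRound_inj hw (htask _ hpT) (htask _ ht) h)
  have hhi_lt : ∀ t ∈ T, hi t < n := by
    intro t ht
    rw [hhidef]
    by_cases hpT : p t ∈ T
    · simp only [if_pos hpT]
      have h1 := aRound_lt_n (htask _ ht)
      have h2 := aRound_lt_n (htask _ hpT)
      omega
    · simp only [if_neg hpT]
      exact aRound_lt_n (htask _ ht)
  have hlohi : ∀ t ∈ T, lo t ≤ hi t := by
    intro t ht
    rw [hlodef, hhidef]
    by_cases hpT : p t ∈ T
    · simp only [if_pos hpT]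
      have := hrne t ht hpT
      omega
    · simp only [if_neg hpT]
      omega
  have har_mem : ∀ t ∈ T, aRound w t ≤ hi t := by
    intro t ht
    rw [hhidef]
    by_cases hpT : p t ∈ T
    · simp only [if_pos hpT]
      omega
    · simp only [if_neg hpT]
      omega
  have hdom : ∀ t ∈ T, ∀ k ∈ I t, c (w k).1 (w k).2 ≤ c (p t) t := by
    intro t ht k hk
    obtain ⟨hk1, hk2⟩ := (hmemI t k).mp hk
    have hfinish : ∀ s u : V, s ∈ R ∪ auctionAssigned w (k : ℕ) →
        u ∈ T \ auctionAssigned w (k : ℕ) → c s u = c (p t) t →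
        c (w k).1 (w k).2 ≤ c (p t) t := by
      intro s u hs hu hc
      by_cases heq : (s, u) = w k
      · rw [← heq, hc]
      · rw [← hc]
        exact ((hw k).2.2 s hs u hu heq).le
    by_cases hpT : p t ∈ T
    · rw [hlodef] at hk1
      rw [hhidef] at hk2
      simp only [if_pos hpT] at hk1 hk2
      rcases (hrne t ht hpT).lt_or_gt with hlt | hgt
      · refine hfinish (p t) t ?_ ?_ rfl
        · refine Finset.mem_union_right _ ?_
          rw [mem_assigned_iff hw (htask _ hpT)]
          omega
        · refine Finset.mem_sdiff.mpr ⟨ht, ?_⟩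
          rw [mem_assigned_iff hw (htask _ ht)]
          omega
      · refine hfinish t (p t) ?_ ?_ (hsymm _ _)
        · refine Finset.mem_union_right _ ?_
          rw [mem_assigned_iff hw (htask _ ht)]
          omega
        · refine Finset.mem_sdiff.mpr ⟨hpT, ?_⟩
          rw [mem_assigned_iff hw (htask _ hpT)]
          omega
    · have hpR : p t ∈ R := by
        have : p t ∈ R ∪ T := hunion ▸ Finset.mem_univ _
        rcases Finset.mem_union.mp this with h | h
        · exact h
        · exact absurd h hpT
      rw [hhidef] at hk2
      simp only [if_neg hpT] at hk2
      refine hfinish (p t) t (Finset.mem_union_left _ hpR) ?_ rfl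
      refine Finset.mem_sdiff.mpr ⟨ht, ?_⟩
      rw [mem_assigned_iff hw (htask _ ht)]
      omega
  have hIhi : ∀ t (ht : t ∈ T), (⟨hi t, hhi_lt t ht⟩ : Fin n) ∈ I t :=
    fun t ht => (hmemI t _).mpr ⟨hlohi t ht, le_refl _⟩
  have hfe : ∀ (U : Finset (Fin n)), U = ∅ → T.filter (fun t => I t ⊆ U) = ∅ := by
    intro U hUe
    rw [Finset.eq_empty_iff_forall_notMem]
    intro t htf
    obtain ⟨htT, hsub⟩ := Finset.mem_filter.mp htf
    have := hsub (hIhi t htT)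
    rw [hUe] at this
    exact absurd this (Finset.notMem_empty _)
  have KEY : ∀ m (U : Finset (Fin n)), U.card ≤ m →
      (T.filter (fun t => I t ⊆ U)).card ≤ U.card := by
    intro m
    induction m with
    | zero =>
      intro U hU
      have hUe : U = ∅ := Finset.card_eq_zero.mp (le_antisymm hU (Nat.zero_le _))
      rw [hfe U hUe]
      simp
    | succ m ih =>
      intro U hU
      rcases U.eq_empty_or_nonempty with hUe | hUne
      · rw [hfe U hUe]
        simp
      · set a := U.min' hUne with hadef
        set b := U.max' hUne with hbdef
        have hamem : a ∈ U := U.min'_mem hUne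
        have hbmem : b ∈ U := U.max'_mem hUne
        have hUsub : U ⊆ Finset.Icc a b := fun k hk =>
          Finset.mem_Icc.mpr ⟨U.min'_le _ hk, U.le_max' _ hk⟩
        have hn0 : 0 < n := Nat.lt_of_le_of_lt (Nat.zero_le _) a.isLt
        by_cases hIcc : Finset.Icc a b ⊆ U
        · have hUeq : U = Finset.Icc a b := Finset.Subset.antisymm hUsub hIcc
          have hcardU : U.card = (b : ℕ) + 1 - (a : ℕ) := by
            rw [hUeq, Fin.card_Icc]
          have hbounds : ∀ t ∈ T.filter (fun t => I t ⊆ U),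
              (a : ℕ) ≤ lo t ∧ hi t ≤ (b : ℕ) := by
            intro t htf
            obtain ⟨htT, hsub⟩ := Finset.mem_filter.mp htf
            have hlomem : (⟨lo t, Nat.lt_of_le_of_lt (hlohi t htT) (hhi_lt t htT)⟩ : Fin n) ∈ I t :=
              (hmemI t _).mpr ⟨le_refl _, hlohi t htT⟩
            have h1 := hsub hlomem
            have h2 := hsub (hIhi t htT)
            rw [hUeq, Finset.mem_Icc] at h1 h2
            constructor
            · have := h1.1
              rw [Fin.le_def] at this
              exact this
            · have := h2.2
              rw [Fin.le_def] at this
              exact this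
          rcases Nat.eq_zero_or_pos (a : ℕ) with ha0 | hapos
          · refine Finset.card_le_card_of_injOn
              (fun t => (⟨aRound w t % n, Nat.mod_lt _ hn0⟩ : Fin n)) ?_ ?_
            · intro t htf
              have htT := (Finset.mem_filter.mp htf).1
              have harlt := aRound_lt_n (htask _ htT)
              have hmod : aRound w t % n = aRound w t := Nat.mod_eq_of_lt harlt
              rw [hUeq, Finset.mem_coe, Finset.mem_Icc]
              constructor
              · rw [Fin.le_def]
                simp only [hmod]
                omega
              · rw [Fin.le_def]
                simp only [hmod]
                exact le_trans (har_mem t htT) (hbounds t htf).2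
            · intro t htf t' htf' heq
              have htT := (Finset.mem_filter.mp htf).1
              have htT' := (Finset.mem_filter.mp htf').1
              have h1 : aRound w t % n = aRound w t' % n := congrArg Fin.val heq
              rw [Nat.mod_eq_of_lt (aRound_lt_n (htask _ htT)),
                Nat.mod_eq_of_lt (aRound_lt_n (htask _ htT'))] at h1
              exact aRound_inj hw (htask _ htT) (htask _ htT') h1
          · set F := T.filter (fun x => (a : ℕ) - 1 ≤ aRound w x ∧ aRound w x ≤ (b : ℕ))
              with hFdef
            have hsubF : T.filter (fun t => I t ⊆ U) ⊆ F.filter (fun t => p t ∈ F) := by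
              intro t htf
              have htT := (Finset.mem_filter.mp htf).1
              obtain ⟨halo, hhib⟩ := hbounds t htf
              have hpT : p t ∈ T := by
                by_contra hc
                rw [hlodef] at halo
                simp only [if_neg hc] at halo
                omega
              rw [hlodef] at halo
              rw [hhidef] at hhib
              simp only [if_pos hpT] at halo hhib
              refine Finset.mem_filter.mpr ⟨?_, ?_⟩
              · refine Finset.mem_filter.mpr ⟨htT, ?_, ?_⟩ <;> omega
              · refine Finset.mem_filter.mpr ⟨hpT, ?_, ?_⟩ <;> omega
            rcases (T.filter (fun t => I t ⊆ U)).eq_empty_or_nonempty with he | hne2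
            · rw [he]
              simp
            · have hFne : F.Nonempty := by
                obtain ⟨t, htf⟩ := hne2
                exact ⟨t, (Finset.mem_filter.mp (hsubF htf)).1⟩
              obtain ⟨t0, ht0F, ht0min⟩ := Finset.exists_min_image F ν hFne
              have hpt0 : p t0 ∉ F := by
                intro hmem
                have hpT : p t0 ∈ T := (Finset.mem_filter.mp hmem).1
                have h1 := (hp t0 (Finset.mem_filter.mp ht0F).1).2 hpT
                have h2 := ht0min _ hmem
                omega
              have hsubF' : T.filter (fun t => I t ⊆ U) ⊆ F.erase t0 := by
                intro t htf
                have hmf := hsubF htf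
                obtain ⟨htF, hptF⟩ := Finset.mem_filter.mp hmf
                refine Finset.mem_erase.mpr ⟨?_, htF⟩
                rintro rfl
                exact hpt0 hptF
              have hFcard : F.card ≤ (b : ℕ) + 1 - ((a : ℕ) - 1) := by
                have h := Finset.card_le_card_of_injOn (fun x => aRound w x)
                  (s := F) (t := Finset.Icc ((a : ℕ) - 1) (b : ℕ)) ?_ ?_
                · rwa [Nat.card_Icc] at h
                · intro x hx
                  obtain ⟨_, hx1, hx2⟩ := Finset.mem_filter.mp hx
                  exact Finset.mem_Icc.mpr ⟨hx1, hx2⟩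
                · intro x hx y hy hxy
                  exact aRound_inj hw (htask _ (Finset.mem_filter.mp hx).1)
                    (htask _ (Finset.mem_filter.mp hy).1) hxy
              have hcard1 : (T.filter (fun t => I t ⊆ U)).card ≤ (F.erase t0).card :=
                Finset.card_le_card hsubF'
              have hcard2 : (F.erase t0).card = F.card - 1 :=
                Finset.card_erase_of_mem ht0F
              have hab : (a : ℕ) ≤ (b : ℕ) := by
                have := U.min'_le _ hbmem
                rw [Fin.le_def] at this
                exact this
              omega
        · obtain ⟨g, hgIcc, hgU⟩ := Finset.not_subset.mp hIcc
          obtain ⟨hag, hgb⟩ := Finset.mem_Icc.mp hgIcc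
          have hga : a ≠ g := fun h => hgU (h ▸ hamem)
          have hgbne : g ≠ b := fun h => hgU (h ▸ hbmem)
          set U₁ := U.filter (fun k => k < g) with hU1def
          set U₂ := U.filter (fun k => g < k) with hU2def
          have hU12disj : Disjoint U₁ U₂ := by
            rw [Finset.disjoint_left]
            intro k hk1 hk2
            exact absurd ((Finset.mem_filter.mp hk2).2) (asymm (Finset.mem_filter.mp hk1).2)
          have hU12 : U₁ ∪ U₂ = U := by
            rw [hU1def, hU2def]
            ext k
            simp only [Finset.mem_union, Finset.mem_filter]
            constructor
            · rintro (⟨hk, _⟩ | ⟨hk, _⟩) <;> exact hk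
            · intro hk
              have hkg : k ≠ g := fun h => hgU (h ▸ hk)
              rcases hkg.lt_or_gt with h | h
              · exact Or.inl ⟨hk, h⟩
              · exact Or.inr ⟨hk, h⟩
          have hcard12 : U₁.card + U₂.card = U.card := by
            rw [← Finset.card_union_of_disjoint hU12disj, hU12]
          have hb1 : b ∉ U₁ := by
            intro hmem
            have := (Finset.mem_filter.mp hmem).2
            exact absurd this (asymm (lt_of_le_of_ne hgb hgbne))
          have ha2 : a ∉ U₂ := by
            intro hmem
            have := (Finset.mem_filter.mp hmem).2
            exact absurd this (asymm (lt_of_le_of_ne hag hga))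
          have hc1 : U₁.card ≤ m := by
            have : U₁ ⊂ U := ⟨Finset.filter_subset _ _, fun hsub => hb1 (hsub hbmem)⟩
            have := Finset.card_lt_card this
            omega
          have hc2 : U₂.card ≤ m := by
            have : U₂ ⊂ U := ⟨Finset.filter_subset _ _, fun hsub => ha2 (hsub hamem)⟩
            have := Finset.card_lt_card this
            omega
          have hsplit : ∀ t ∈ T, I t ⊆ U → I t ⊆ U₁ ∨ I t ⊆ U₂ := by
            intro t htT hsub
            by_cases hall : ∀ x ∈ I t, x < g
            · left
              intro x hx
              exact Finset.mem_filter.mpr ⟨hsub hx, hall x hx⟩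
            · push_neg at hall
              obtain ⟨x, hxI, hxge⟩ := hall
              right
              intro y hy
              refine Finset.mem_filter.mpr ⟨hsub hy, ?_⟩
              by_contra hyg
              push_neg at hyg
              have hgmem : g ∈ I t := by
                refine (hmemI t g).mpr ⟨?_, ?_⟩
                · have h1 := ((hmemI t y).mp hy).1
                  have h2 : (y : ℕ) ≤ (g : ℕ) := hyg
                  omega
                · have h1 := ((hmemI t x).mp hxI).2
                  have h2 : (g : ℕ) ≤ (x : ℕ) := hxge
                  omega
              exact hgU (hsub hgmem)
          have hsubA : T.filter (fun t => I t ⊆ U) ⊆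
              (T.filter (fun t => I t ⊆ U₁)) ∪ (T.filter (fun t => I t ⊆ U₂)) := by
            intro t htf
            obtain ⟨htT, hsub⟩ := Finset.mem_filter.mp htf
            rcases hsplit t htT hsub with h | h
            · exact Finset.mem_union_left _ (Finset.mem_filter.mpr ⟨htT, h⟩)
            · exact Finset.mem_union_right _ (Finset.mem_filter.mpr ⟨htT, h⟩)
          calc (T.filter (fun t => I t ⊆ U)).card
              ≤ ((T.filter (fun t => I t ⊆ U₁)) ∪ (T.filter (fun t => I t ⊆ U₂))).card :=
                Finset.card_le_card hsubA
            _ ≤ (T.filter (fun t => I t ⊆ U₁)).card + (T.filter (fun t => I t ⊆ U₂)).card :=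
                Finset.card_union_le _ _
            _ ≤ U₁.card + U₂.card := Nat.add_le_add (ih U₁ hc1) (ih U₂ hc2)
            _ = U.card := hcard12
  -- Hall's theorem
  have hall_cond : ∀ (s : Finset {x // x ∈ T}),
      s.card ≤ (s.biUnion (fun t => I t.1)).card := by
    intro s
    set U := s.biUnion (fun t => I t.1) with hUdef
    have hsub : ∀ t ∈ s, I t.1 ⊆ U := fun t ht => Finset.subset_biUnion_of_mem (fun (t : {x // x ∈ T}) => I t.1) ht
    have h1 : s.card ≤ (T.filter (fun t => I t ⊆ U)).card := by
      refine Finset.card_le_card_of_injOn (fun t => t.1) ?_ ?_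
      · intro t ht
        exact Finset.mem_filter.mpr ⟨t.2, hsub t ht⟩
      · intro x _ y _ h
        exact Subtype.ext h
    exact h1.trans (KEY U.card U le_rfl)
  obtain ⟨f, hfinj, hfI⟩ :=
    (Finset.all_card_le_biUnion_card_iff_exists_injective
      (fun t : {x // x ∈ T} => I t.1)).mp hall_cond
  have hbij : Function.Bijective f := by
    rw [Fintype.bijective_iff_injective_and_card]
    refine ⟨hfinj, ?_⟩
    rw [Fintype.card_coe, Fintype.card_fin, hn]
  have hsum1 : ∑ k : Fin n, c (w k).1 (w k).2 =
      ∑ t : {x // x ∈ T}, c (w (f t)).1 (w (f t)).2 :=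
    (Fintype.sum_bijective f hbij _ _ (fun t => rfl)).symm
  rw [hsum1, ← Finset.sum_coe_sort T (fun t => c (p t) t)]
  exact Finset.sum_le_sum (fun t _ => hdom t.1 t.2 (f t) (hfI t))

end HallSide
theorem statement5 {V : Type*} [Fintype V] [DecidableEq V] (R T : Finset V)
    (hdisj : Disjoint R T) (hunion : R ∪ T = Finset.univ) (hcard : 3 ≤ Fintype.card V)
    (c : V → V → ℝ)
    -- `c` is metric
    (hsymm : ∀ x y, c x y = c y x) (hpos : ∀ x y : V, x ≠ y → 0 < c x y)
    (htri : ∀ x y z : V, c x z ≤ c x y + c y z)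
    (hinj : InjOnEdges c)
    (w : Fin T.card → V × V) (hw : IsAuction R T c w) :
    ∃ P : V → List V, IsPlan R T P ∧
      -- (i) the vertex set of each robot-route is the vertex set of the connected
      -- component of the auction forest containing its starting robot
      (∀ r ∈ R, ∀ v : V, v ∈ P r ↔ (auctionGraph w).Reachable r v) ∧
      -- (ii) the cost of the plan is at most twice the minimum cost of a plan
      (∀ Q : V → List V, IsPlan R T Q →
        ∑ r ∈ R, pathCost c (P r) ≤ 2 * ∑ r ∈ R, pathCost c (Q r)) := by
  classical
  have c0 : ∀ x y, 0 ≤ c x y := by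
    intro x y
    by_cases h : x = y
    · subst h
      have := htri x x x
      linarith
    · exact (hpos x y h).le
  have hmemP : ∀ r v : V, v ∈ fOcc (aTour w r) ↔ (v = r ∨ v ∈ aDesc w r) :=
    fun r v => (fOcc_mem).trans (mem_aTour_iff hw hdisj)
  have hR0 : ∀ r ∈ R, aHt w r = 0 := fun r hr => robot_ht_zero hw hdisj hr
  have hroot_iff : ∀ r ∈ R, ∀ v : V, (v = r ∨ v ∈ aDesc w r) ↔ aRoot w v = r := by
    intro r hr v
    rw [or_comm]
    exact aDesc_root hw hdisj (hR0 r hr)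
  refine ⟨fun r => fOcc (aTour w r), ⟨?_, ?_, ?_⟩, ?_, ?_⟩
  · -- routes start at robots, rest is tasks
    intro r hr
    cases hP : fOcc (aTour w r) with
    | nil =>
      exfalso
      have h := fOcc_head? (aTour w r)
      rw [hP, aTour_head?] at h
      simp at h
    | cons a rest =>
      have hhead : a = r := by
        have h := fOcc_head? (aTour w r)
        rw [hP, aTour_head?] at h
        exact Option.some_inj.mp h
      subst hhead
      refine ⟨rest, hP, ?_⟩
      intro v hv
      have hvP : v ∈ fOcc (aTour w a) := by
        rw [hP]
        exact List.mem_cons_of_mem _ hv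
      rcases (hmemP a v).mp hvP with rfl | hd
      · exfalso
        have hnd := fOcc_nodup (aTour w v)
        rw [hP] at hnd
        exact (List.nodup_cons.mp hnd).1 hv
      · obtain ⟨⟨k, hk⟩, _⟩ := mem_aDesc.mp hd
        exact hk ▸ (snd_mem_T hw k).1
  · -- nodup
    intro r _
    exact fOcc_nodup _
  · -- partition
    intro v
    refine ⟨aRoot w v, ⟨aRoot_mem_R hw rfl hdisj hunion v, ?_⟩, ?_⟩
    · refine (hmemP _ v).mpr ?_
      rw [or_comm]
      exact (aDesc_root hw hdisj (aRoot_ht_zero hw hdisj v)).mpr rfl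
    · rintro r' ⟨hr', hv⟩
      exact ((hroot_iff r' hr' v).mp ((hmemP r' v).mp hv)).symm
  · -- (i) components
    intro r hr v
    exact ((hmemP r v).trans (hroot_iff r hr v)).trans
      (reachable_iff_root hw hdisj (hR0 r hr)).symm
  · -- (ii) cost bound
    intro Q hQ
    obtain ⟨p, ν, hp, hple⟩ := plan_pred hdisj hQ c0
    have h1 : ∑ r ∈ R, pathCost c (fOcc (aTour w r)) ≤ ∑ r ∈ R, pathCost c (aTour w r) :=
      Finset.sum_le_sum (fun r _ => pathCost_sublist c0 htri (fOcc_sublist _))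
    have h2 := total_tour_cost hw rfl hdisj hunion hsymm
    have h3 := auction_le_plan hw rfl hdisj hunion hsymm p ν hp
    linarith
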